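/- Let n ≥ 1 and let C be any clique cover of the path P_{2n+1} consisting of exactly one singleton clique and n cliques that are edges of the path. Then the graph C{P_{2n+1}} obtained by the clique cover construction has the same domination polynomial as H_{2n+1}, namely D(C{P_{2n+1}}, x) = (x³ + 3x² + x)(x⁴ + 4x³ + 6x² + 2x)^n. -/

import Mathlib

open Polynomial

variable {V W : Type*}

/-- `S` is a dominating set of `G`. -/
def Dominates (G : SimpleGraph V) (S : Finset V) : Prop :=
  ∀ v, v ∉ S → ∃ u ∈ S, G.Adj u v

open Classical in
/-- The domination polynomial of a finite simple graph. -/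
noncomputable def domPoly [Fintype V] (G : SimpleGraph V) : Polynomial ℤ :=
  ∑ S : Finset V, if Dominates G S then (X : Polynomial ℤ) ^ S.card else 0

/-- Stevanović's clique cover construction `C{G}`. -/
def cliqueCoverConstruction (G : SimpleGraph V) {k : ℕ} (C : Fin k → Finset V) :
    SimpleGraph (V ⊕ Fin k × Fin 2) where
  Adj x y :=
    match x, y with
    | Sum.inl a, Sum.inl b => G.Adj a b
    | Sum.inl a, Sum.inr (i, _) => a ∈ C i
    | Sum.inr (i, _), Sum.inl a => a ∈ C i
    | Sum.inr _, Sum.inr _ => False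
  symm := by
    constructor
    rintro (a | ⟨i, t⟩) (b | ⟨j, s⟩) h
    · exact G.adj_symm h
    · exact h
    · exact h
    · exact h.elim
  loopless := by
    constructor
    rintro (a | ⟨i, t⟩) h
    · exact G.irrefl h
    · exact h

/-- clique cover of the odd path -/
def oddCover (n : ℕ) : Fin (n + 1) → Finset (Fin (2 * n + 1)) :=
  fun i =>
    if i.val = 0 then {⟨0, by omega⟩}
    else {⟨2 * i.val - 1, by have := i.isLt; omega⟩, ⟨2 * i.val, by have := i.isLt; omega⟩}

/-- The graph `H_{2n+1}`. -/
def H2n1 (n : ℕ) : SimpleGraph (Fin (2 * n + 1) ⊕ Fin (n + 1) × Fin 2) :=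
  cliqueCoverConstruction (SimpleGraph.pathGraph (2 * n + 1)) (oddCover n)

section Aux

open scoped Classical

variable [Fintype V] {k : ℕ}

/-- Block of the clique cover construction. -/
noncomputable def Blk (C : Fin k → Finset V) (i : Fin k) : Finset (V ⊕ Fin k × Fin 2) :=
  (C i).image Sum.inl ∪ {Sum.inr (i, 0), Sum.inr (i, 1)}

def Good (C : Fin k → Finset V) (i : Fin k) (A : Finset (V ⊕ Fin k × Fin 2)) : Prop :=
  (∃ v ∈ C i, Sum.inl v ∈ A) ∨ (Sum.inr (i, 0) ∈ A ∧ Sum.inr (i, 1) ∈ A)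

lemma mem_Blk {C : Fin k → Finset V} {i : Fin k} {x : V ⊕ Fin k × Fin 2} :
    x ∈ Blk C i ↔ (∃ v ∈ C i, x = Sum.inl v) ∨ x = Sum.inr (i, 0) ∨ x = Sum.inr (i, 1) := by
  simp only [Blk, Finset.mem_union, Finset.mem_image, Finset.mem_insert, Finset.mem_singleton]
  constructor
  · rintro (⟨v, hv, rfl⟩ | h | h)
    · exact Or.inl ⟨v, hv, rfl⟩
    · exact Or.inr (Or.inl h)
    · exact Or.inr (Or.inr h)
  · rintro (⟨v, hv, rfl⟩ | h | h)
    · exact Or.inl ⟨v, hv, rfl⟩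
    · exact Or.inr (Or.inl h)
    · exact Or.inr (Or.inr h)

lemma existsUnique_blk {C : Fin k → Finset V} (hpart : ∀ v, ∃! i, v ∈ C i)
    (x : V ⊕ Fin k × Fin 2) : ∃! i, x ∈ Blk C i := by
  rcases x with v | ⟨j, t⟩
  · obtain ⟨i, hi, hu⟩ := hpart v
    refine ⟨i, mem_Blk.mpr (Or.inl ⟨v, hi, rfl⟩), fun j hj => ?_⟩
    rcases mem_Blk.mp hj with ⟨w, hw, hwe⟩ | h | h
    · cases hwe; exact hu _ hw
    · exact absurd h (by simp)
    · exact absurd h (by simp)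
  · refine ⟨j, ?_, fun i hi => ?_⟩
    · fin_cases t
      · exact mem_Blk.mpr (Or.inr (Or.inl rfl))
      · exact mem_Blk.mpr (Or.inr (Or.inr rfl))
    · rcases mem_Blk.mp hi with ⟨w, _, hwe⟩ | h | h
      · exact absurd hwe (by simp)
      · exact (congrArg Prod.fst (Sum.inr_injective h)).symm
      · exact (congrArg Prod.fst (Sum.inr_injective h)).symm

lemma blk_disjoint {C : Fin k → Finset V} (hpart : ∀ v, ∃! i, v ∈ C i)
    {i j : Fin k} (hij : i ≠ j) : Disjoint (Blk C i) (Blk C j) := by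
  rw [Finset.disjoint_left]
  intro x hxi hxj
  obtain ⟨l, _, hu⟩ := existsUnique_blk hpart x
  exact hij ((hu i hxi).trans (hu j hxj).symm)

lemma card_Blk (C : Fin k → Finset V) (i : Fin k) : (Blk C i).card = (C i).card + 2 := by
  rw [Blk, Finset.card_union_of_disjoint (by simp [Finset.disjoint_left]),
    Finset.card_image_of_injective _ Sum.inl_injective, Finset.card_pair (by simp)]

lemma dominates_iff (G : SimpleGraph V) (C : Fin k → Finset V)
    (hpart : ∀ v, ∃! i, v ∈ C i)
    (hclique : ∀ i, ∀ u ∈ C i, ∀ v ∈ C i, u ≠ v → G.Adj u v)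
    (S : Finset (V ⊕ Fin k × Fin 2)) :
    Dominates (cliqueCoverConstruction G C) S ↔ ∀ i, Good C i S := by
  constructor
  · intro h i
    by_cases h0 : ∃ v ∈ C i, Sum.inl v ∈ S
    · exact Or.inl h0
    · refine Or.inr ⟨?_, ?_⟩ <;>
      · by_contra hc
        obtain ⟨u, hu, hadj⟩ := h _ hc
        rcases u with a | ⟨j, t⟩
        · exact h0 ⟨a, hadj, hu⟩
        · exact hadj
  · intro h x hx
    rcases x with v | ⟨i, t⟩
    · obtain ⟨i, hvi, _⟩ := hpart v
      rcases h i with ⟨w, hw, hwS⟩ | ⟨h0, h1⟩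
      · rcases eq_or_ne w v with rfl | hne
        · exact absurd hwS hx
        · exact ⟨Sum.inl w, hwS, hclique i w hw v hvi hne⟩
      · exact ⟨Sum.inr (i, 0), h0, hvi⟩
    · rcases h i with ⟨w, hw, hwS⟩ | ⟨h0, h1⟩
      · exact ⟨Sum.inl w, hwS, hw⟩
      · fin_cases t
        · exact absurd h0 hx
        · exact absurd h1 hx

lemma sum_powerset_pow {α : Type*} (s : Finset α) :
    ∑ A ∈ s.powerset, (X : Polynomial ℤ) ^ A.card = (X + 1) ^ s.card := by
  classical
  rw [← Finset.prod_const, Finset.prod_add]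
  exact Finset.sum_congr rfl fun A _ => by simp

lemma subset_pair_cases {α : Type*} [DecidableEq α] {a b : α} {A : Finset α}
    (h : A ⊆ {a, b}) (hn : ¬(a ∈ A ∧ b ∈ A)) : A = ∅ ∨ A = {a} ∨ A = {b} := by
  by_cases ha : a ∈ A <;> by_cases hb : b ∈ A
  · exact absurd ⟨ha, hb⟩ hn
  · refine Or.inr (Or.inl (Finset.Subset.antisymm (fun x hx => ?_) (by simpa using ha)))
    rcases Finset.mem_insert.mp (h hx) with rfl | hx'
    · exact Finset.mem_singleton_self _
    · rw [Finset.mem_singleton] at hx'; subst hx'; exact absurd hx hb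
  · refine Or.inr (Or.inr (Finset.Subset.antisymm (fun x hx => ?_) (by simpa using hb)))
    rcases Finset.mem_insert.mp (h hx) with rfl | hx'
    · exact absurd hx ha
    · exact hx'
  · refine Or.inl (Finset.eq_empty_of_forall_notMem fun x hx => ?_)
    rcases Finset.mem_insert.mp (h hx) with rfl | hx'
    · exact ha hx
    · rw [Finset.mem_singleton] at hx'; subst hx'; exact hb hx

lemma sum_good (C : Fin k → Finset V) (i : Fin k) :
    ∑ A ∈ (Blk C i).powerset.filter (Good C i), (X : Polynomial ℤ) ^ A.card
      = (X + 1) ^ ((C i).card + 2) - (1 + 2 * X) := by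
  have hbad : (Blk C i).powerset.filter (fun A => ¬ Good C i A)
      = {∅, {Sum.inr (i, 0)}, {Sum.inr (i, 1)}} := by
    ext A
    simp only [Finset.mem_filter, Finset.mem_powerset, Finset.mem_insert, Finset.mem_singleton]
    constructor
    · rintro ⟨hsub, hbad⟩
      rw [Good, not_or] at hbad
      obtain ⟨hb1, hb2⟩ := hbad
      push_neg at hb1
      have hA : A ⊆ {Sum.inr (i, 0), Sum.inr (i, 1)} := by
        intro x hx
        rcases mem_Blk.mp (hsub hx) with ⟨v, hv, rfl⟩ | rfl | rfl
        · exact absurd hx (hb1 v hv)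
        · exact Finset.mem_insert_self _ _
        · exact Finset.mem_insert_of_mem (Finset.mem_singleton_self _)
      exact subset_pair_cases hA hb2
    · rintro (rfl | rfl | rfl) <;>
        simp [Good, Finset.subset_iff, mem_Blk]
  have hsplit := Finset.sum_filter_add_sum_filter_not (Blk C i).powerset (Good C i)
    (fun A => (X : Polynomial ℤ) ^ A.card)
  rw [hbad] at hsplit
  have h3 : ∑ A ∈ ({∅, {Sum.inr (i, 0)}, {Sum.inr (i, 1)}} :
      Finset (Finset (V ⊕ Fin k × Fin 2))), (X : Polynomial ℤ) ^ A.card = 1 + 2 * X := by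
    rw [Finset.sum_insert (by simp only [Finset.mem_insert, Finset.mem_singleton]; push_neg; exact ⟨(Finset.singleton_ne_empty _).symm, (Finset.singleton_ne_empty _).symm⟩), Finset.sum_insert (by simp [Finset.ext_iff]),
      Finset.sum_singleton]
    simp; ring
  rw [h3, sum_powerset_pow, card_Blk] at hsplit
  linear_combination hsplit

lemma domPoly_ccc (G : SimpleGraph V) (C : Fin k → Finset V)
    (hpart : ∀ v, ∃! i, v ∈ C i)
    (hclique : ∀ i, ∀ u ∈ C i, ∀ v ∈ C i, u ≠ v → G.Adj u v) :
    domPoly (cliqueCoverConstruction G C)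
      = ∏ i : Fin k, ((X + 1) ^ ((C i).card + 2) - (1 + 2 * X) : Polynomial ℤ) := by
  have key : ∏ i : Fin k, ((X + 1) ^ ((C i).card + 2) - (1 + 2 * X) : Polynomial ℤ)
      = ∑ p ∈ Fintype.piFinset (fun i => (Blk C i).powerset.filter (Good C i)),
          ∏ i, (X : Polynomial ℤ) ^ (p i).card := by
    calc ∏ i : Fin k, ((X + 1) ^ ((C i).card + 2) - (1 + 2 * X) : Polynomial ℤ)
        = ∏ i : Fin k, ∑ A ∈ (Blk C i).powerset.filter (Good C i),
            (fun (_ : Fin k) (A : Finset (V ⊕ Fin k × Fin 2)) =>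
              (X : Polynomial ℤ) ^ A.card) i A :=
          Finset.prod_congr rfl fun i _ => (sum_good C i).symm
      _ = _ := Finset.prod_univ_sum _ _
  rw [key, domPoly, ← Finset.sum_filter]
  refine Finset.sum_nbij' (fun S => fun i => S ∩ Blk C i)
    (fun p => Finset.univ.biUnion p) ?_ ?_ ?_ ?_ ?_
  · intro S hS
    rw [Finset.mem_filter] at hS
    rw [Fintype.mem_piFinset]
    intro i
    rw [Finset.mem_filter, Finset.mem_powerset]
    refine ⟨Finset.inter_subset_right, ?_⟩
    rcases (dominates_iff G C hpart hclique S).mp hS.2 i with ⟨w, hw, hwS⟩ | ⟨h0, h1⟩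
    · exact Or.inl ⟨w, hw, Finset.mem_inter.mpr ⟨hwS, mem_Blk.mpr (Or.inl ⟨w, hw, rfl⟩)⟩⟩
    · exact Or.inr ⟨Finset.mem_inter.mpr ⟨h0, mem_Blk.mpr (Or.inr (Or.inl rfl))⟩,
        Finset.mem_inter.mpr ⟨h1, mem_Blk.mpr (Or.inr (Or.inr rfl))⟩⟩
  · intro p hp
    rw [Fintype.mem_piFinset] at hp
    rw [Finset.mem_filter]
    refine ⟨Finset.mem_univ _, (dominates_iff G C hpart hclique _).mpr fun i => ?_⟩
    have hgood : Good C i (p i) := (Finset.mem_filter.mp (hp i)).2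
    have hsub : p i ⊆ Finset.univ.biUnion p :=
      Finset.subset_biUnion_of_mem p (Finset.mem_univ i)
    rcases hgood with ⟨w, hw, hwS⟩ | ⟨h0, h1⟩
    · exact Or.inl ⟨w, hw, hsub hwS⟩
    · exact Or.inr ⟨hsub h0, hsub h1⟩
  · intro S hS
    ext x
    simp only [Finset.mem_biUnion, Finset.mem_univ, true_and, Finset.mem_inter]
    constructor
    · rintro ⟨i, hx, _⟩; exact hx
    · intro hx
      obtain ⟨i, hi, _⟩ := existsUnique_blk hpart x
      exact ⟨i, hx, hi⟩
  · intro p hp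
    rw [Fintype.mem_piFinset] at hp
    funext i
    have hsub : ∀ j, p j ⊆ Blk C j := fun j =>
      Finset.mem_powerset.mp (Finset.mem_filter.mp (hp j)).1
    ext x
    simp only [Finset.mem_inter, Finset.mem_biUnion, Finset.mem_univ, true_and]
    constructor
    · rintro ⟨⟨j, hj⟩, hxB⟩
      obtain ⟨l, _, hu⟩ := existsUnique_blk hpart x
      have : j = i := (hu j (hsub j hj)).trans (hu i hxB).symm
      exact this ▸ hj
    · intro hx
      exact ⟨⟨i, hx⟩, hsub i hx⟩
  · intro S hS
    rw [Finset.prod_pow_eq_pow_sum]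
    congr 1
    rw [← Finset.card_biUnion]
    · congr 1
      ext x
      simp only [Finset.mem_biUnion, Finset.mem_univ, true_and, Finset.mem_inter]
      constructor
      · intro hx
        obtain ⟨i, hi, _⟩ := existsUnique_blk hpart x
        exact ⟨i, hx, hi⟩
      · rintro ⟨i, hx, _⟩; exact hx
    · intro i _ j _ hij
      exact Finset.disjoint_of_subset_left Finset.inter_subset_right
        (Finset.disjoint_of_subset_right Finset.inter_subset_right
          (blk_disjoint hpart hij))

lemma prod_formula {n : ℕ} (c : Fin (n + 1) → ℕ) (i₀ : Fin (n + 1))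
    (h1 : c i₀ = 1) (h2 : ∀ i, i ≠ i₀ → c i = 2) :
    ∏ i, ((X + 1) ^ (c i + 2) - (1 + 2 * X) : Polynomial ℤ)
      = (X ^ 3 + 3 * X ^ 2 + X) * (X ^ 4 + 4 * X ^ 3 + 6 * X ^ 2 + 2 * X) ^ n := by
  rw [← Finset.mul_prod_erase _ _ (Finset.mem_univ i₀)]
  have h3 : ∀ i ∈ Finset.univ.erase i₀,
      ((X + 1) ^ (c i + 2) - (1 + 2 * X) : Polynomial ℤ)
        = X ^ 4 + 4 * X ^ 3 + 6 * X ^ 2 + 2 * X := by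
    intro i hi
    rw [h2 i (Finset.ne_of_mem_erase hi)]
    ring
  rw [Finset.prod_congr rfl h3, Finset.prod_const, h1]
  have hcard : (Finset.univ.erase i₀).card = n := by
    rw [Finset.card_erase_of_mem (Finset.mem_univ _), Finset.card_univ]
    simp
  rw [hcard]
  congr 1
  ring

end Aux

lemma mem_oddCover {n : ℕ} {i : Fin (n + 1)} {v : Fin (2 * n + 1)} :
    v ∈ oddCover n i ↔ (i.val = 0 ∧ v.val = 0) ∨
      (i.val ≠ 0 ∧ (v.val = 2 * i.val - 1 ∨ v.val = 2 * i.val)) := by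
  unfold oddCover
  split_ifs with h <;> simp only [Finset.mem_insert, Finset.mem_singleton, Fin.ext_iff, Fin.val_mk] <;> omega

lemma oddCover_part (n : ℕ) : ∀ v, ∃! i, v ∈ oddCover n i := by
  intro v
  have hv := v.isLt
  refine ⟨⟨(v.val + 1) / 2, by omega⟩, mem_oddCover.mpr ?_, ?_⟩
  · simp only [ne_eq]
    omega
  · intro j hj
    rw [mem_oddCover] at hj
    apply Fin.ext
    simp only []
    omega

lemma oddCover_clique (n : ℕ) : ∀ i, ∀ u ∈ oddCover n i, ∀ v ∈ oddCover n i, u ≠ v →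
    (SimpleGraph.pathGraph (2 * n + 1)).Adj u v := by
  intro i u hu v hv huv
  rw [mem_oddCover] at hu hv
  rw [SimpleGraph.pathGraph_adj]
  have hne : u.val ≠ v.val := fun h => huv (Fin.ext h)
  omega

lemma oddCover_card (n : ℕ) (i : Fin (n + 1)) :
    (oddCover n i).card = if i = 0 then 1 else 2 := by
  unfold oddCover
  rcases eq_or_ne i 0 with rfl | hi
  · simp
  · have h0 : i.val ≠ 0 := fun h => hi (Fin.ext h)
    rw [if_neg h0, if_neg hi, Finset.card_pair (by simp [Fin.ext_iff]; omega)]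


/-- Any clique cover of `P_{2n+1}` consisting of exactly one singleton
clique and `n` cliques that are edges of the path yields, via the clique cover
construction, a graph with the same domination polynomial as `H_{2n+1}`. -/
theorem domPoly_cliqueCoverConstruction_oddPath (n : ℕ) (hn : 1 ≤ n)
    (C : Fin (n + 1) → Finset (Fin (2 * n + 1)))
    (hpart : ∀ v, ∃! i, v ∈ C i)
    (i₀ : Fin (n + 1)) (hsingle : (C i₀).card = 1)
    (hedges : ∀ i, i ≠ i₀ →
      ∃ u v, (SimpleGraph.pathGraph (2 * n + 1)).Adj u v ∧ C i = {u, v}) :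
    domPoly (cliqueCoverConstruction (SimpleGraph.pathGraph (2 * n + 1)) C) =
        domPoly (H2n1 n) ∧
      domPoly (cliqueCoverConstruction (SimpleGraph.pathGraph (2 * n + 1)) C) =
        (X ^ 3 + 3 * X ^ 2 + X) * (X ^ 4 + 4 * X ^ 3 + 6 * X ^ 2 + 2 * X) ^ n := by
  have hclique : ∀ i, ∀ u ∈ C i, ∀ v ∈ C i, u ≠ v →
      (SimpleGraph.pathGraph (2 * n + 1)).Adj u v := by
    intro i u hu v hv huv
    rcases eq_or_ne i i₀ with rfl | hi
    · exact absurd (Finset.card_le_one.mp hsingle.le u hu v hv) huv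
    · obtain ⟨a, b, hab, hCi⟩ := hedges i hi
      rw [hCi, Finset.mem_insert, Finset.mem_singleton] at hu hv
      rcases hu with rfl | rfl <;> rcases hv with rfl | rfl
      · exact absurd rfl huv
      · exact hab
      · exact hab.symm
      · exact absurd rfl huv
  have hcard2 : ∀ i, i ≠ i₀ → (C i).card = 2 := by
    intro i hi
    obtain ⟨a, b, hab, hCi⟩ := hedges i hi
    rw [hCi, Finset.card_pair hab.ne]
  have hC : domPoly (cliqueCoverConstruction (SimpleGraph.pathGraph (2 * n + 1)) C) =
      (X ^ 3 + 3 * X ^ 2 + X) * (X ^ 4 + 4 * X ^ 3 + 6 * X ^ 2 + 2 * X) ^ n := by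
    rw [domPoly_ccc _ C hpart hclique]
    exact prod_formula (fun i => (C i).card) i₀ hsingle hcard2
  have hH : domPoly (H2n1 n) =
      (X ^ 3 + 3 * X ^ 2 + X) * (X ^ 4 + 4 * X ^ 3 + 6 * X ^ 2 + 2 * X) ^ n := by
    rw [H2n1, domPoly_ccc _ (oddCover n) (oddCover_part n) (oddCover_clique n)]
    refine prod_formula (fun i => (oddCover n i).card) 0 ?_ ?_
    · simp [oddCover_card]
    · intro i hi; simp [oddCover_card, hi]
  exact ⟨hC.trans hH.symm, hC⟩
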